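/- Let α, θ, h₊, h₋, c₀ ∈ ℝ. Define v, w : ℂ → ℂ by v(ζ) = exp(iα + θζ) and w(ζ) = (h₊ − h₋)·ζ + i·h₋ + c₀ + (1/4)·exp(θ(ζ + conj ζ)) − (1/8)·exp(−2iα)·exp(2θ·conj ζ) + (1/8)·exp(2iα)·exp(2θζ). For a real-differentiable f : ℂ → ℂ write ∂̄f(ζ) = (1/2)·(∂₁f(ζ) + i·∂₂f(ζ)), where ∂₁f(ζ) and ∂₂f(ζ) are the directional derivatives of f at ζ in the directions 1 and i respectively. Then for every ζ ∈ ℂ: ∂̄v(ζ) = 0 and ∂̄w(ζ) = −(1/2) · Im(v(ζ)) · ∂₂(conj ∘ v)(ζ). -/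

import Mathlib

open Complex

private lemma hd_exp (c b : ℂ) :
    HasDerivAt (fun t : ℝ => Complex.exp (c + (t : ℂ) * b)) (Complex.exp c * b) 0 := by
  have h : HasDerivAt (fun t : ℝ => c + (t : ℂ) * b) b 0 := by
    simpa using ((Complex.ofRealCLM.hasDerivAt (x := (0:ℝ))).mul_const b).const_add c
  simpa using h.cexp

private lemma ld_eq (f : ℂ → ℂ) (ζ d L : ℂ)
    (h : HasDerivAt (fun t : ℝ => f (ζ + t • d)) L 0) :
    lineDeriv ℝ f ζ d = L := h.deriv

private lemma hd_path (ζ d : ℂ) :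
    HasDerivAt (fun t : ℝ => ζ + (t : ℂ) * d) d 0 := by
  simpa using ((Complex.ofRealCLM.hasDerivAt (x := (0:ℝ))).mul_const d).const_add ζ

/-- The operator `∂̄f(ζ) = (1/2)·(∂₁f(ζ) + i·∂₂f(ζ))`, where `∂₁f(ζ)` and `∂₂f(ζ)` are
the directional (line) derivatives of `f` at `ζ` in the directions `1` and `i`. -/
noncomputable def dbar (f : ℂ → ℂ) (ζ : ℂ) : ℂ :=
  (1 / 2) * (lineDeriv ℝ f ζ 1 + Complex.I * lineDeriv ℝ f ζ Complex.I)

/-- The explicit truncated local solution near a Reeb chord: with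
`v(ζ) = exp(iα + θζ)` and
`w(ζ) = (h₊ − h₋)ζ + i h₋ + c₀ + (1/4) exp(θ(ζ + ζ̄)) − (1/8) exp(−2iα) exp(2θζ̄)
  + (1/8) exp(2iα) exp(2θζ)`,
one has `∂̄v = 0` and `∂̄w(ζ) = −(1/2)·Im(v(ζ))·∂₂(conj ∘ v)(ζ)`. -/
theorem truncated_local_solution (α θ hp hm c₀ : ℝ) :
    let v : ℂ → ℂ := fun ζ => Complex.exp (Complex.I * (α : ℂ) + (θ : ℂ) * ζ)
    let w : ℂ → ℂ := fun ζ =>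
      ((hp : ℂ) - (hm : ℂ)) * ζ + Complex.I * (hm : ℂ) + (c₀ : ℂ)
        + (1 / 4) * Complex.exp ((θ : ℂ) * (ζ + (starRingEnd ℂ) ζ))
        - (1 / 8) * Complex.exp (-2 * Complex.I * (α : ℂ))
            * Complex.exp (2 * (θ : ℂ) * (starRingEnd ℂ) ζ)
        + (1 / 8) * Complex.exp (2 * Complex.I * (α : ℂ))
            * Complex.exp (2 * (θ : ℂ) * ζ)
    ∀ ζ : ℂ,
      dbar v ζ = 0 ∧
      dbar w ζ = -(1 / 2) * ((v ζ).im : ℂ)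
          * lineDeriv ℝ (fun s => (starRingEnd ℂ) (v s)) ζ Complex.I := by
  intro v w ζ
  -- line derivatives of v
  have hv1 : lineDeriv ℝ v ζ 1
      = Complex.exp (Complex.I * α + θ * ζ) * θ := by
    apply ld_eq
    have h := hd_exp (Complex.I * α + θ * ζ) θ
    have e : (fun t : ℝ => v (ζ + t • (1:ℂ)))
        = fun t : ℝ => Complex.exp ((Complex.I * α + θ * ζ) + (t : ℂ) * θ) := by
      funext t
      simp only [v, Complex.real_smul]
      ring_nf
    rw [e]; exact h
  have hvI : lineDeriv ℝ v ζ Complex.I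
      = Complex.exp (Complex.I * α + θ * ζ) * (θ * Complex.I) := by
    apply ld_eq
    have h := hd_exp (Complex.I * α + θ * ζ) (θ * Complex.I)
    have e : (fun t : ℝ => v (ζ + t • Complex.I))
        = fun t : ℝ => Complex.exp ((Complex.I * α + θ * ζ) + (t : ℂ) * (θ * Complex.I)) := by
      funext t
      simp only [v, Complex.real_smul]
      ring_nf
    rw [e]; exact h
  -- line derivative of conj ∘ v in direction I
  have hcvI : lineDeriv ℝ (fun s => (starRingEnd ℂ) (v s)) ζ Complex.I
      = Complex.exp (-(Complex.I * α) + θ * (starRingEnd ℂ) ζ) * (-(θ * Complex.I)) := by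
    apply ld_eq
    have h := hd_exp (-(Complex.I * α) + θ * (starRingEnd ℂ) ζ) (-(θ * Complex.I))
    have e : (fun t : ℝ => (starRingEnd ℂ) (v (ζ + t • Complex.I)))
        = fun t : ℝ => Complex.exp ((-(Complex.I * α) + θ * (starRingEnd ℂ) ζ)
            + (t : ℂ) * (-(θ * Complex.I))) := by
      funext t
      simp only [v, Complex.real_smul, ← Complex.exp_conj, map_add, map_mul,
        Complex.conj_ofReal, Complex.conj_I]
      ring_nf
    rw [e]; exact h
  -- line derivatives of w
  have hw1 : lineDeriv ℝ w ζ 1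
      = ((hp : ℂ) - hm) * 1
        + (1/4) * Complex.exp (θ * (ζ + (starRingEnd ℂ) ζ)) * (2*θ)
        - (1/8) * Complex.exp (-2 * Complex.I * α)
            * (Complex.exp (2 * θ * (starRingEnd ℂ) ζ) * (2*θ))
        + (1/8) * Complex.exp (2 * Complex.I * α)
            * (Complex.exp (2 * θ * ζ) * (2*θ)) := by
    apply ld_eq
    have e : (fun t : ℝ => w (ζ + t • (1:ℂ)))
        = fun t : ℝ =>
          ((hp : ℂ) - hm) * (ζ + (t : ℂ) * 1) + (Complex.I * hm + c₀)
          + (1/4) * Complex.exp ((θ * (ζ + (starRingEnd ℂ) ζ)) + (t : ℂ) * (2*θ))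
          - (1/8) * Complex.exp (-2 * Complex.I * α)
              * Complex.exp ((2 * θ * (starRingEnd ℂ) ζ) + (t : ℂ) * (2*θ))
          + (1/8) * Complex.exp (2 * Complex.I * α)
              * Complex.exp ((2 * θ * ζ) + (t : ℂ) * (2*θ)) := by
      funext t
      simp only [w, Complex.real_smul, mul_one, map_add, map_mul, map_one,
        Complex.conj_ofReal]
      ring_nf
    rw [e]
    have h1 := ((hd_path ζ 1).const_mul ((hp : ℂ) - hm)).add_const (Complex.I * hm + c₀)
    have h2 := (hd_exp (θ * (ζ + (starRingEnd ℂ) ζ)) (2*θ)).const_mul (1/4 : ℂ)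
    have h3 := (hd_exp (2 * θ * (starRingEnd ℂ) ζ) (2*θ)).const_mul
      ((1/8 : ℂ) * Complex.exp (-2 * Complex.I * α))
    have h4 := (hd_exp (2 * θ * ζ) (2*θ)).const_mul
      ((1/8 : ℂ) * Complex.exp (2 * Complex.I * α))
    have := ((h1.add h2).sub h3).add h4
    exact this.congr_deriv (by ring)
  have hwI : lineDeriv ℝ w ζ Complex.I
      = ((hp : ℂ) - hm) * Complex.I
        - (1/8) * Complex.exp (-2 * Complex.I * α)
            * (Complex.exp (2 * θ * (starRingEnd ℂ) ζ) * (-(2*θ*Complex.I)))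
        + (1/8) * Complex.exp (2 * Complex.I * α)
            * (Complex.exp (2 * θ * ζ) * (2*θ*Complex.I)) := by
    apply ld_eq
    have e : (fun t : ℝ => w (ζ + t • Complex.I))
        = fun t : ℝ =>
          ((hp : ℂ) - hm) * (ζ + (t : ℂ) * Complex.I) + (Complex.I * hm + c₀)
          + (1/4) * Complex.exp ((θ * (ζ + (starRingEnd ℂ) ζ)) + (t : ℂ) * 0)
          - (1/8) * Complex.exp (-2 * Complex.I * α)
              * Complex.exp ((2 * θ * (starRingEnd ℂ) ζ) + (t : ℂ) * (-(2*θ*Complex.I)))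
          + (1/8) * Complex.exp (2 * Complex.I * α)
              * Complex.exp ((2 * θ * ζ) + (t : ℂ) * (2*θ*Complex.I)) := by
      funext t
      simp only [w, Complex.real_smul, map_add, map_mul, Complex.conj_ofReal, Complex.conj_I]
      ring_nf
    rw [e]
    have h1 := ((hd_path ζ Complex.I).const_mul ((hp : ℂ) - hm)).add_const (Complex.I * hm + c₀)
    have h2 := (hd_exp (θ * (ζ + (starRingEnd ℂ) ζ)) 0).const_mul (1/4 : ℂ)
    have h3 := (hd_exp (2 * θ * (starRingEnd ℂ) ζ) (-(2*θ*Complex.I))).const_mul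
      ((1/8 : ℂ) * Complex.exp (-2 * Complex.I * α))
    have h4 := (hd_exp (2 * θ * ζ) (2*θ*Complex.I)).const_mul
      ((1/8 : ℂ) * Complex.exp (2 * Complex.I * α))
    have := ((h1.add h2).sub h3).add h4
    exact this.congr_deriv (by ring)
  constructor
  · simp only [dbar, hv1, hvI]
    linear_combination (1/2) * Complex.exp (Complex.I * α + θ * ζ) * θ * Complex.I_sq
  · -- express the imaginary part
    have him : ((v ζ).im : ℂ)
        = -(Complex.I / 2) * (v ζ - (starRingEnd ℂ) (v ζ)) := by
      have h := Complex.sub_conj (v ζ)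
      push_cast at h
      linear_combination (Complex.I / 2) * h + ((v ζ).im : ℂ) * Complex.I_sq
    have hconj : (starRingEnd ℂ) (v ζ)
        = Complex.exp (-(Complex.I * α) + θ * (starRingEnd ℂ) ζ) := by
      simp only [v, ← Complex.exp_conj, map_add, map_mul, Complex.conj_ofReal, Complex.conj_I]
      ring_nf
    simp only [dbar, hw1, hwI, hcvI, him, hconj, v]
    set P := Complex.exp ((θ : ℂ) * ζ) with hP
    set Q := Complex.exp ((θ : ℂ) * (starRingEnd ℂ) ζ) with hQ
    set a := Complex.exp (Complex.I * (α : ℂ)) with ha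
    set b := Complex.exp (-(Complex.I * (α : ℂ))) with hb
    have hab : a * b = 1 := by
      rw [ha, hb, ← Complex.exp_add]; simp
    have e1 : Complex.exp ((θ : ℂ) * (ζ + (starRingEnd ℂ) ζ)) = P * Q := by
      rw [hP, hQ, ← Complex.exp_add]; congr 1; ring
    have e2 : Complex.exp (2 * (θ : ℂ) * (starRingEnd ℂ) ζ) = Q * Q := by
      rw [hQ, ← Complex.exp_add]; congr 1; ring
    have e3 : Complex.exp (2 * (θ : ℂ) * ζ) = P * P := by
      rw [hP, ← Complex.exp_add]; congr 1; ring
    have e4 : Complex.exp (-2 * Complex.I * (α : ℂ)) = b * b := by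
      rw [hb, ← Complex.exp_add]; congr 1; ring
    have e5 : Complex.exp (2 * Complex.I * (α : ℂ)) = a * a := by
      rw [ha, ← Complex.exp_add]; congr 1; ring
    have e6 : Complex.exp (Complex.I * (α : ℂ) + (θ : ℂ) * ζ) = a * P := by
      rw [ha, hP, ← Complex.exp_add]
    have e7 : Complex.exp (-(Complex.I * (α : ℂ)) + (θ : ℂ) * (starRingEnd ℂ) ζ) = Q * b := by
      rw [hb, hQ, ← Complex.exp_add]; congr 1; ring
    rw [e1, e2, e3, e4, e5, e6, e7]
    linear_combination ((1/2 : ℂ) * ((hp : ℂ) - hm) + ((θ : ℂ)/8) * a^2 * P^2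
        + ((θ : ℂ)/4) * P * Q - ((θ : ℂ)/8) * b^2 * Q^2) * Complex.I_sq
      + (((θ : ℂ)/4) * P * Q * Complex.I^2) * hab
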